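/- arXiv:2210.13968 — 2 statements merged into one kernel-verified Lean document; each statement's English description precedes it below -/
import Mathlib

section
/- Let f : E₁ → ℝ be differentiable and α-strongly convex for some α > 0, let ρ > 0, and for q = (x,y) ∈ E and w ∈ E₂ define S(q,w) := f(x) + ⟨w, 𝒦q⟩ + (ρ/2)‖𝒦q‖². Set α_S := min{α/2, αρ/(α + 2ρ‖𝒜‖²)} > 0. Then for every fixed w ∈ E₂ the function q ↦ S(q,w) is α_S-strongly convex; in particular, for all q₁, q₂ ∈ E, S(q₂,w) − S(q₁,w) ≥ ⟨∇_q S(q₁,w), q₂ − q₁⟩ + (α_S/2)‖q₂ − q₁‖². -/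
open scoped RealInnerProductSpace
noncomputable section

variable {E₁ E₂ : Type*}
  [NormedAddCommGroup E₁] [InnerProductSpace ℝ E₁] [FiniteDimensional ℝ E₁]
  [NormedAddCommGroup E₂] [InnerProductSpace ℝ E₂] [FiniteDimensional ℝ E₂]

/-- The constraint map `𝒦(x,y) := 𝒜x − y` on the product inner product space
`E := E₁ ×₂ E₂`, as a continuous linear map. -/
def Kmap (A : E₁ →L[ℝ] E₂) : WithLp 2 (E₁ × E₂) →L[ℝ] E₂ :=
  (A.comp (ContinuousLinearMap.fst ℝ E₁ E₂) - ContinuousLinearMap.snd ℝ E₁ E₂).comp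
    (WithLp.prodContinuousLinearEquiv 2 ℝ E₁ E₂).toContinuousLinearMap

/-- The smooth part of the augmented Lagrangian,
`S(q,w) := f(x) + ⟨w, 𝒦q⟩ + (ρ/2)‖𝒦q‖²`. -/
def SAL (f : E₁ → ℝ) (A : E₁ →L[ℝ] E₂) (ρ : ℝ) (q : WithLp 2 (E₁ × E₂)) (w : E₂) : ℝ :=
  f (WithLp.equiv 2 (E₁ × E₂) q).1 + ⟪w, Kmap A q⟫ + ρ / 2 * ‖Kmap A q‖ ^ 2

set_option maxHeartbeats 1000000

def P₁ : WithLp 2 (E₁ × E₂) →L[ℝ] E₁ :=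
  (ContinuousLinearMap.fst ℝ E₁ E₂).comp
    (WithLp.prodContinuousLinearEquiv 2 ℝ E₁ E₂).toContinuousLinearMap

lemma SAL_hasFDerivAt (f : E₁ → ℝ) (A : E₁ →L[ℝ] E₂) (ρ : ℝ) (w : E₂)
    (hdiff : Differentiable ℝ f) (q₁ : WithLp 2 (E₁ × E₂)) :
    HasFDerivAt (fun q => SAL f A ρ q w)
      (((fderiv ℝ f (P₁ q₁)).comp P₁ + (innerSL ℝ w).comp (Kmap A)) +
        (ρ / 2) • ((fderivInnerCLM ℝ (Kmap A q₁, Kmap A q₁)).comp ((Kmap A).prod (Kmap A)))) q₁ := by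
  have hP : HasFDerivAt (⇑(P₁ : WithLp 2 (E₁ × E₂) →L[ℝ] E₁)) P₁ q₁ :=
    ContinuousLinearMap.hasFDerivAt (f := P₁) (x := q₁)
  have hK : HasFDerivAt (⇑(Kmap A)) (Kmap A) q₁ :=
    ContinuousLinearMap.hasFDerivAt (f := Kmap A) (x := q₁)
  have hW : HasFDerivAt (⇑((innerSL ℝ w).comp (Kmap A))) ((innerSL ℝ w).comp (Kmap A)) q₁ :=
    ContinuousLinearMap.hasFDerivAt (f := (innerSL ℝ w).comp (Kmap A)) (x := q₁)
  have h1 : HasFDerivAt (fun q : WithLp 2 (E₁ × E₂) => f (P₁ q))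
      ((fderiv ℝ f (P₁ q₁)).comp P₁) q₁ :=
    ((hdiff (P₁ q₁)).hasFDerivAt).comp q₁ hP
  have h2 : HasFDerivAt (fun q : WithLp 2 (E₁ × E₂) => ⟪w, Kmap A q⟫)
      ((innerSL ℝ w).comp (Kmap A)) q₁ := hW
  have h3 : HasFDerivAt (fun q : WithLp 2 (E₁ × E₂) => ⟪Kmap A q, Kmap A q⟫)
      ((fderivInnerCLM ℝ (Kmap A q₁, Kmap A q₁)).comp ((Kmap A).prod (Kmap A))) q₁ :=
    hK.inner ℝ hK
  have h3' := h3.const_mul (ρ / 2)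
  simp only [real_inner_self_eq_norm_sq] at h3'
  exact (h1.add h2).add h3'

lemma key_scalar (α ρ N p r t : ℝ) (hα : 0 < α) (hρ : 0 < ρ)
    (hr : 0 ≤ r) (ht : 0 ≤ t) (htr : r - N * p ≤ t) :
    min (α / 2) (α * ρ / (α + 2 * ρ * N ^ 2)) * (p ^ 2 + r ^ 2) ≤ α * p ^ 2 + ρ * t ^ 2 := by
  have hK : 0 < α + 2 * ρ * N ^ 2 := by positivity
  rcases le_total r (N * p) with h | h
  · have h1 : min (α / 2) (α * ρ / (α + 2 * ρ * N ^ 2)) ≤ α / 2 := min_le_left _ _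
    have h2 : min (α / 2) (α * ρ / (α + 2 * ρ * N ^ 2)) * (α + 2 * ρ * N ^ 2) ≤ α * ρ := by
      rw [← le_div_iff₀ hK]; exact min_le_right _ _
    have h0 : 0 ≤ min (α / 2) (α * ρ / (α + 2 * ρ * N ^ 2)) :=
      le_min (by positivity) (by positivity)
    set c := min (α / 2) (α * ρ / (α + 2 * ρ * N ^ 2)) with hc
    have hr2 : r ^ 2 ≤ N ^ 2 * p ^ 2 := by nlinarith
    have hcc : c * (1 + N ^ 2) ≤ α := by nlinarith [mul_nonneg h0 hα.le]
    nlinarith [mul_le_mul_of_nonneg_left hr2 h0,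
      mul_le_mul_of_nonneg_right hcc (sq_nonneg p), sq_nonneg t]
  · have ht2 : (r - N * p) ^ 2 ≤ t ^ 2 := by nlinarith
    have hd : 0 ≤ r - N * p := by linarith
    set d := r - N * p with hdef
    have hr2' : r ^ 2 = d ^ 2 + 2 * N * p * d + N ^ 2 * p ^ 2 := by rw [hdef]; ring
    rcases le_total (α / 2) (α * ρ / (α + 2 * ρ * N ^ 2)) with hb | hb
    · rw [min_eq_left hb]
      have hbranch : α + 2 * ρ * N ^ 2 ≤ 2 * ρ := by
        rw [div_le_div_iff₀ (by norm_num) hK] at hb; nlinarith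
      have h2ρ : α ≤ 2 * ρ := by nlinarith [sq_nonneg N]
      have hExpr : 0 ≤ α * (1 - N ^ 2) * p ^ 2 + (2 * ρ - α) * d ^ 2 - 2 * α * N * p * d := by
        rcases eq_or_lt_of_le h2ρ with heq | hlt
        · have hN2 : N ^ 2 = 0 := le_antisymm (by nlinarith) (sq_nonneg N)
          have hN0 : N = 0 := pow_eq_zero_iff (n := 2) (by norm_num) |>.mp hN2
          rw [hN0]; nlinarith [sq_nonneg p, sq_nonneg d]
        · nlinarith [sq_nonneg ((2 * ρ - α) * d - α * N * p),
            mul_nonneg (mul_nonneg hα.le (sq_nonneg p))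
              (by linarith : (0:ℝ) ≤ 2 * ρ - α - 2 * ρ * N ^ 2)]
      nlinarith [mul_le_mul_of_nonneg_left ht2 hρ.le]
    · rw [min_eq_right hb]
      have hbranch : 2 * ρ ≤ α + 2 * ρ * N ^ 2 := by
        rw [div_le_div_iff₀ hK (by norm_num)] at hb; nlinarith
      rw [div_mul_eq_mul_div, div_le_iff₀ hK]
      have hExpr3 : α * ρ * (p ^ 2 + r ^ 2) ≤ (α * p ^ 2 + ρ * d ^ 2) * (α + 2 * ρ * N ^ 2) := by
        rw [hr2']
        nlinarith [sq_nonneg (2 * ρ * N * d - α * p),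
          mul_nonneg (mul_nonneg hα.le (sq_nonneg p))
            (by linarith : (0:ℝ) ≤ α + 2 * ρ * N ^ 2 - 2 * ρ)]
      nlinarith [mul_le_mul_of_nonneg_left ht2 (mul_pos hρ hK).le]

/-- if `f` is differentiable and `α`-strongly convex with `α > 0` and
`ρ > 0`, then for every fixed `w` the function `q ↦ S(q,w)` is `α_S`-strongly convex with
`α_S := min {α/2, αρ/(α + 2ρ‖𝒜‖²)} > 0`. -/
theorem sal_strongly_convex (f : E₁ → ℝ) (α ρ : ℝ) (A : E₁ →L[ℝ] E₂)
    (hα : 0 < α) (hρ : 0 < ρ) (hdiff : Differentiable ℝ f)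
    (hsc : ∀ u v : E₁, f v ≥ f u + ⟪gradient f u, v - u⟫ + α / 2 * ‖v - u‖ ^ 2) :
    0 < min (α / 2) (α * ρ / (α + 2 * ρ * ‖A‖ ^ 2)) ∧
    ∀ w : E₂, ∀ q₁ q₂ : WithLp 2 (E₁ × E₂),
      SAL f A ρ q₂ w - SAL f A ρ q₁ w ≥
        ⟪gradient (fun q => SAL f A ρ q w) q₁, q₂ - q₁⟫ +
          min (α / 2) (α * ρ / (α + 2 * ρ * ‖A‖ ^ 2)) / 2 * ‖q₂ - q₁‖ ^ 2 := by
  have hK0 : (0:ℝ) < α + 2 * ρ * ‖A‖ ^ 2 := by positivity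
  refine ⟨lt_min (by positivity) (by positivity), fun w q₁ q₂ => ?_⟩
  have hS := SAL_hasFDerivAt f A ρ w hdiff q₁
  set L := ((fderiv ℝ f (P₁ q₁)).comp P₁ + (innerSL ℝ w).comp (Kmap A)) +
      (ρ / 2) • ((fderivInnerCLM ℝ (Kmap A q₁, Kmap A q₁)).comp ((Kmap A).prod (Kmap A)))
    with hL
  have hgradL : ⟪gradient (fun q => SAL f A ρ q w) q₁, q₂ - q₁⟫ = L (q₂ - q₁) := by
    unfold gradient
    rw [hS.fderiv, InnerProductSpace.toDual_symm_apply]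
  have hf1 : ∀ (u v : E₁), ⟪gradient f u, v⟫ = fderiv ℝ f u v := by
    intro u v
    unfold gradient
    rw [InnerProductSpace.toDual_symm_apply]
  have hLd : L (q₂ - q₁) = ⟪gradient f (P₁ q₁), P₁ q₂ - P₁ q₁⟫
      + ⟪w, Kmap A q₂ - Kmap A q₁⟫ + ρ * ⟪Kmap A q₁, Kmap A q₂ - Kmap A q₁⟫ := by
    rw [hL]
    simp only [ContinuousLinearMap.add_apply, ContinuousLinearMap.coe_smul',
      Pi.smul_apply, ContinuousLinearMap.comp_apply, ContinuousLinearMap.prod_apply,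
      fderivInnerCLM_apply, innerSL_apply_apply, map_sub, hf1, smul_eq_mul,
      inner_sub_left, inner_sub_right]
    rw [real_inner_comm (Kmap A q₂) (Kmap A q₁)]
    ring
  have hSAL : ∀ q, SAL f A ρ q w = f (P₁ q) + ⟪w, Kmap A q⟫ + ρ / 2 * ‖Kmap A q‖ ^ 2 :=
    fun q => rfl
  have hquad : ρ / 2 * ‖Kmap A q₂‖ ^ 2 - ρ / 2 * ‖Kmap A q₁‖ ^ 2
      - ρ * ⟪Kmap A q₁, Kmap A q₂ - Kmap A q₁⟫ = ρ / 2 * ‖Kmap A q₂ - Kmap A q₁‖ ^ 2 := by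
    rw [norm_sub_sq_real, inner_sub_right, real_inner_self_eq_norm_sq,
      real_inner_comm (Kmap A q₁) (Kmap A q₂)]
    ring
  have hstrong := hsc (P₁ q₁) (P₁ q₂)
  -- the vector pieces
  have hKsub : Kmap A q₂ - Kmap A q₁ = A (P₁ q₂ - P₁ q₁) - (q₂.snd - q₁.snd) := by
    have : ∀ q : WithLp 2 (E₁ × E₂), Kmap A q = A (P₁ q) - q.snd := fun q => rfl
    rw [this, this, map_sub]
    abel
  have hnormq : ‖q₂ - q₁‖ ^ 2 = ‖P₁ q₂ - P₁ q₁‖ ^ 2 + ‖q₂.snd - q₁.snd‖ ^ 2 := by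
    rw [WithLp.prod_norm_sq_eq_of_L2]
    rfl
  set u := P₁ q₂ - P₁ q₁ with hu
  set v := q₂.snd - q₁.snd with hv
  have htr : ‖v‖ - ‖A‖ * ‖u‖ ≤ ‖A u - v‖ := by
    have h1 : ‖v‖ - ‖A u‖ ≤ ‖A u - v‖ := by
      rw [norm_sub_rev (A u) v]; exact norm_sub_norm_le _ _
    have h2 : ‖A u‖ ≤ ‖A‖ * ‖u‖ := A.le_opNorm u
    linarith
  have hkey := key_scalar α ρ ‖A‖ ‖u‖ ‖v‖ ‖A u - v‖ hα hρ (norm_nonneg _)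
    (norm_nonneg _) htr
  have hnormk : ‖Kmap A q₂ - Kmap A q₁‖ = ‖A u - v‖ := by rw [hKsub]
  rw [← hnormk] at hkey htr
  have hinner : ⟪w, Kmap A q₂ - Kmap A q₁⟫ = ⟪w, Kmap A q₂⟫ - ⟪w, Kmap A q₁⟫ :=
    inner_sub_right w _ _
  rw [ge_iff_le, hgradL, hLd, hSAL, hSAL, hnormq]
  nlinarith [hkey, hstrong, hquad, hinner]

end
end

section
/- Let ℱ ⊆ ℝᵈ be a compact convex polytope. There exists a constant λ ≥ 1, depending only on ℱ, such that the following holds: for every p ∈ ℝᵈ, every c > 0, every point x ∈ ℱ written as a convex combination of vertices z₁,…,z_t of ℱ, and every vertex z_{t+1} of ℱ minimizing ⟨z, p⟩ over z ∈ ℱ, if γ* is an optimal solution of the problem min over γ ∈ ℝ^{t+1}, γ ≥ 0, Σᵢγᵢ = 1 of ⟨Σᵢ γᵢ zᵢ, p⟩ + (c/2)‖Σᵢ γᵢ zᵢ − x‖², then the point v := Σᵢ γ*ᵢ zᵢ ∈ ℱ satisfies ⟨v, p⟩ + (c/2)‖v − x‖² ≤ ⟨u, p⟩ + (λc/2)‖u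 − x‖² for all u ∈ ℱ. -/
open scoped RealInnerProductSpace
noncomputable section

open Finset

noncomputable section

variable {d : ℕ}

local notation "E" => EuclideanSpace ℝ (Fin d)

lemma inner_isLinear (n : E) : IsLinearMap ℝ (fun w : E => ⟪n, w⟫) :=
  ⟨fun x y => inner_add_right n x y, fun c x => real_inner_smul_right n x c⟩

lemma hull_le {T : Set (EuclideanSpace ℝ (Fin d))} {n : E} {b : ℝ}
    (h : ∀ v ∈ T, ⟪n, v⟫ ≤ b) {z : E} (hz : z ∈ convexHull ℝ T) : ⟪n, z⟫ ≤ b := by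
  have : convexHull ℝ T ⊆ {w : E | ⟪n, w⟫ ≤ b} :=
    convexHull_min h (convex_halfSpace_le (inner_isLinear n) b)
  exact this hz

lemma abs_coord_le_norm (v : E) (i : Fin d) : |v i| ≤ ‖v‖ := by
  have h := abs_real_inner_le_norm (EuclideanSpace.single i (1:ℝ)) v
  simpa [EuclideanSpace.inner_single_left, EuclideanSpace.norm_single] using h

/-- Weyl: a polytope (hull of finite nonempty `T`) is a finite intersection of halfspaces. -/
theorem weyl_rep (M : ℝ) (T : Finset (EuclideanSpace ℝ (Fin d))) (hT : T.Nonempty)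
    (hM : ∀ v ∈ T, ∀ i, |v i| < M) :
    ∃ L : Finset (EuclideanSpace ℝ (Fin d) × ℝ),
      (∀ q ∈ L, ∀ z ∈ convexHull ℝ (T : Set (EuclideanSpace ℝ (Fin d))), ⟪q.1, z⟫ ≤ q.2) ∧
      (∀ z : E, (∀ q ∈ L, ⟪q.1, z⟫ ≤ q.2) → z ∈ convexHull ℝ (T : Set (EuclideanSpace ℝ (Fin d)))) ∧
      (∀ i : Fin d, (EuclideanSpace.single i (1:ℝ), M) ∈ L ∧ (EuclideanSpace.single i (-1:ℝ), M) ∈ L) := by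
  classical
  induction hT using Finset.Nonempty.cons_induction with
  | singleton v =>
    refine ⟨((univ.image fun i : Fin d => (EuclideanSpace.single i (1:ℝ), M)) ∪
             (univ.image fun i : Fin d => (EuclideanSpace.single i (-1:ℝ), M))) ∪
            ((univ.image fun i : Fin d => (EuclideanSpace.single i (1:ℝ), v i)) ∪
             (univ.image fun i : Fin d => (EuclideanSpace.single i (-1:ℝ), -(v i)))), ?_, ?_, ?_⟩
    · intro q hq z hz
      have hv : ∀ i, |v i| < M := hM v (mem_singleton_self v)
      rw [coe_singleton, convexHull_singleton, Set.mem_singleton_iff] at hz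
      subst hz
      simp only [mem_union, mem_image, mem_univ, true_and] at hq
      rcases hq with ((⟨i, hi⟩ | ⟨i, hi⟩) | (⟨i, hi⟩ | ⟨i, hi⟩)) <;> subst hi <;>
        simp only [EuclideanSpace.inner_single_left, starRingEnd_apply, star_one, one_mul,
          star_neg, neg_mul, neg_neg, star_one] <;>
      [exact le_of_lt ((abs_lt.1 (hv i)).2);
       exact le_of_lt (by linarith [(abs_lt.1 (hv i)).1]);
       exact le_refl _;
       exact le_refl _]
    · intro z hz
      have h1 : ∀ i, z i ≤ v i := by
        intro i
        have := hz (EuclideanSpace.single i (1:ℝ), v i) (by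
          apply mem_union_right; apply mem_union_left; exact mem_image_of_mem _ (mem_univ i))
        simpa [EuclideanSpace.inner_single_left] using this
      have h2 : ∀ i, v i ≤ z i := by
        intro i
        have := hz (EuclideanSpace.single i (-1:ℝ), -(v i)) (by
          apply mem_union_right; apply mem_union_right; exact mem_image_of_mem _ (mem_univ i))
        simp only [EuclideanSpace.inner_single_left, starRingEnd_apply, star_neg, star_one,
          neg_mul, one_mul] at this
        linarith
      have : z = v := by
        ext i
        exact le_antisymm (h1 i) (h2 i)
      rw [coe_singleton, convexHull_singleton, this]
      exact Set.mem_singleton v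
    · intro i
      constructor
      · apply mem_union_left; apply mem_union_left; exact mem_image_of_mem _ (mem_univ i)
      · apply mem_union_left; apply mem_union_right; exact mem_image_of_mem _ (mem_univ i)
  | cons v T hvT hT IH =>
    obtain ⟨L, hLval, hLcomp, hLbox⟩ := IH (fun w hw i => hM w (mem_cons_of_mem hw) i)
    classical
    set Lle : Finset (EuclideanSpace ℝ (Fin d) × ℝ) := L.filter (fun q => ⟪q.1, v⟫ ≤ q.2) with hLle
    set Lgt : Finset (EuclideanSpace ℝ (Fin d) × ℝ) := L.filter (fun q => q.2 < ⟪q.1, v⟫) with hLgt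
    set pr : (EuclideanSpace ℝ (Fin d) × ℝ) × (EuclideanSpace ℝ (Fin d) × ℝ) → EuclideanSpace ℝ (Fin d) × ℝ :=
      fun nm => ((⟪nm.2.1, v⟫ - nm.2.2) • nm.1.1 + (nm.1.2 - ⟪nm.1.1, v⟫) • nm.2.1,
                 (⟪nm.2.1, v⟫ - nm.2.2) * nm.1.2 + (nm.1.2 - ⟪nm.1.1, v⟫) * nm.2.2) with hpr
    refine ⟨Lle ∪ (Lle ×ˢ Lgt).image pr, ?_, ?_, ?_⟩
    · -- validity
      intro q hq z hz
      have hsub : (↑(Finset.cons v T hvT) : Set (EuclideanSpace ℝ (Fin d))) =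
          insert v (↑T : Set (EuclideanSpace ℝ (Fin d))) := by
        rw [Finset.cons_eq_insert, Finset.coe_insert]
      rw [hsub] at hz
      refine hull_le ?_ hz
      intro w hw
      rcases Set.mem_insert_iff.1 hw with rfl | hwT
      · -- at v
        rcases mem_union.1 hq with hq | hq
        · exact (mem_filter.1 hq).2
        · obtain ⟨⟨n, m⟩, hnm, rfl⟩ := mem_image.1 hq
          have hn := mem_filter.1 (mem_product.1 hnm).1
          have hm := mem_filter.1 (mem_product.1 hnm).2
          simp only [hpr, inner_add_left, real_inner_smul_left]
          nlinarith [hn.2, hm.2]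
      · -- at T points
        have hwh : w ∈ convexHull ℝ (↑T : Set (EuclideanSpace ℝ (Fin d))) :=
          subset_convexHull ℝ _ hwT
        rcases mem_union.1 hq with hq | hq
        · exact hLval q (mem_filter.1 hq).1 w hwh
        · obtain ⟨⟨n, m⟩, hnm, rfl⟩ := mem_image.1 hq
          have hn := mem_filter.1 (mem_product.1 hnm).1
          have hm := mem_filter.1 (mem_product.1 hnm).2
          have h1 := hLval n hn.1 w hwh
          have h2 := hLval m hm.1 w hwh
          simp only [hpr, inner_add_left, real_inner_smul_left]
          nlinarith [hn.2, hm.2]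
    · -- completeness
      intro z hz
      have hsub : (↑(Finset.cons v T hvT) : Set (EuclideanSpace ℝ (Fin d))) =
          insert v (↑T : Set (EuclideanSpace ℝ (Fin d))) := by
        rw [Finset.cons_eq_insert, Finset.coe_insert]
      have hvM : ∀ i, |v i| < M := hM v (mem_cons_self v T)
      have hb : ∀ i : Fin d, (EuclideanSpace.single i (1:ℝ), M) ∈ Lle ∧
          (EuclideanSpace.single i (-1:ℝ), M) ∈ Lle := by
        intro i
        constructor
        · rw [hLle, mem_filter]
          refine ⟨(hLbox i).1, ?_⟩
          simp only [EuclideanSpace.inner_single_left, starRingEnd_apply, star_one, one_mul]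
          exact le_of_lt ((abs_lt.1 (hvM i)).2)
        · rw [hLle, mem_filter]
          refine ⟨(hLbox i).2, ?_⟩
          simp only [EuclideanSpace.inner_single_left, starRingEnd_apply, star_neg, star_one,
            neg_mul, one_mul]
          linarith [(abs_lt.1 (hvM i)).1]
      have hpair : ∀ n ∈ Lle, ∀ m ∈ Lgt,
          (⟪m.1, v⟫ - m.2) * (⟪n.1, z⟫ - ⟪n.1, v⟫) +
            (n.2 - ⟪n.1, v⟫) * (⟪m.1, z⟫ - ⟪m.1, v⟫) ≤ 0 := by
        intro n hn m hm
        have hs := hz (pr (n, m)) (mem_union_right _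
          (mem_image_of_mem _ (mem_product.2 ⟨hn, hm⟩)))
        simp only [hpr, inner_add_left, real_inner_smul_left] at hs
        nlinarith [hs]
      have hLsplit : ∀ q ∈ L, q ∈ Lle ∨ q ∈ Lgt := by
        intro q hq
        rcases le_or_gt (⟪q.1, v⟫) q.2 with h | h
        · exact Or.inl (by rw [hLle, mem_filter]; exact ⟨hq, h⟩)
        · exact Or.inr (by rw [hLgt, mem_filter]; exact ⟨hq, h⟩)
      have hzLle : ∀ n ∈ Lle, ⟪n.1, z⟫ ≤ n.2 := fun n hn => hz n (mem_union_left _ hn)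
      by_cases hcase : ∃ m ∈ Lgt, 0 ≤ ⟪m.1, z⟫ - ⟪m.1, v⟫
      · obtain ⟨m, hm, hme⟩ := hcase
        have hmv : m.2 < ⟪m.1, v⟫ := (mem_filter.1 hm).2
        have hzv : z = v := by
          ext i
          have h1 := hpair _ ((hb i).1) m hm
          have h2 := hpair _ ((hb i).2) m hm
          simp only [EuclideanSpace.inner_single_left, starRingEnd_apply, star_one, star_neg,
            one_mul, neg_mul] at h1 h2
          have hi1 := (abs_lt.1 (hvM i)).1
          have hi2 := (abs_lt.1 (hvM i)).2
          nlinarith [h1, h2]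
        rw [hzv, hsub]
        exact subset_convexHull ℝ _ (Set.mem_insert v _)
      · push_neg at hcase
        set A : Finset (EuclideanSpace ℝ (Fin d) × ℝ) :=
          Lle.filter (fun n => 0 < ⟪n.1, z⟫ - ⟪n.1, v⟫) with hA
        have hAslack : ∀ n ∈ A, 0 < n.2 - ⟪n.1, v⟫ := by
          intro n hn
          have h1 := (mem_filter.1 hn).2
          have h2 := hzLle n (mem_filter.1 hn).1
          by_contra h
          push_neg at h
          have : n.2 - ⟪n.1, v⟫ = 0 := le_antisymm h (by
            have := (mem_filter.1 (mem_filter.1 hn).1).2; linarith)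
          linarith
        have hGgap : ∀ m ∈ Lgt, 0 < ⟪m.1, v⟫ - m.2 := by
          intro m hm; have := (mem_filter.1 hm).2; linarith
        set sc : ℝ := if hAne : A.Nonempty then
            A.sup' hAne (fun n => (⟪n.1, z⟫ - ⟪n.1, v⟫) / (n.2 - ⟪n.1, v⟫))
          else if hBne : Lgt.Nonempty then
            min 1 (Lgt.inf' hBne (fun m => (⟪m.1, v⟫ - ⟪m.1, z⟫) / (⟪m.1, v⟫ - m.2)))
          else 1 with hsc
        have hs0 : 0 < sc := by
          rw [hsc]
          split_ifs with hAne hBne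
          · obtain ⟨n, hn⟩ := hAne
            refine lt_of_lt_of_le ?_ (Finset.le_sup' _ hn)
            exact div_pos (mem_filter.1 hn).2 (hAslack n hn)
          · refine lt_min one_pos ?_
            rw [Finset.lt_inf'_iff]
            intro m hm
            exact div_pos (by linarith [hcase m hm]) (hGgap m hm)
          · exact one_pos
        have hs1 : sc ≤ 1 := by
          rw [hsc]
          split_ifs with hAne hBne
          · refine Finset.sup'_le _ _ ?_
            intro n hn
            rw [div_le_one (hAslack n hn)]
            have := hzLle n (mem_filter.1 hn).1
            linarith
          · exact min_le_left _ _
          · exact le_refl 1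
        have hAbd : ∀ n ∈ Lle, ⟪n.1, z⟫ - ⟪n.1, v⟫ ≤ sc * (n.2 - ⟪n.1, v⟫) := by
          intro n hn
          by_cases hnA : n ∈ A
          · have hgap := hAslack n hnA
            have : (⟪n.1, z⟫ - ⟪n.1, v⟫) / (n.2 - ⟪n.1, v⟫) ≤ sc := by
              have hAne : A.Nonempty := ⟨n, hnA⟩
              rw [hsc, dif_pos hAne]
              exact Finset.le_sup'
                (fun q : EuclideanSpace ℝ (Fin d) × ℝ => (⟪q.1, z⟫ - ⟪q.1, v⟫) / (q.2 - ⟪q.1, v⟫)) hnA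
            calc ⟪n.1, z⟫ - ⟪n.1, v⟫
                = (⟪n.1, z⟫ - ⟪n.1, v⟫) / (n.2 - ⟪n.1, v⟫) * (n.2 - ⟪n.1, v⟫) :=
                  (div_mul_cancel₀ _ (ne_of_gt hgap)).symm
              _ ≤ sc * (n.2 - ⟪n.1, v⟫) := by
                  exact mul_le_mul_of_nonneg_right this (le_of_lt hgap)
          · have hd : ⟪n.1, z⟫ - ⟪n.1, v⟫ ≤ 0 := by
              by_contra h
              push_neg at h
              exact hnA (mem_filter.2 ⟨hn, h⟩)
            have hslack : 0 ≤ n.2 - ⟪n.1, v⟫ := by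
              have := (mem_filter.1 hn).2; linarith
            nlinarith
        have hBbd : ∀ m ∈ Lgt, sc * (⟪m.1, v⟫ - m.2) ≤ ⟪m.1, v⟫ - ⟪m.1, z⟫ := by
          intro m hm
          have hgap := hGgap m hm
          have hdm : 0 < ⟪m.1, v⟫ - ⟪m.1, z⟫ := by linarith [hcase m hm]
          have hkey : sc ≤ (⟪m.1, v⟫ - ⟪m.1, z⟫) / (⟪m.1, v⟫ - m.2) := by
            rw [hsc]
            split_ifs with hAne hBne
            · refine Finset.sup'_le _ _ ?_
              intro n hn
              have hp := hpair n (mem_filter.1 hn).1 m hm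
              rw [div_le_div_iff₀ (hAslack n hn) hgap]
              nlinarith [hp]
            · exact le_trans (min_le_right _ _) (Finset.inf'_le _ hm)
            · exact absurd ⟨m, hm⟩ hBne
          calc sc * (⟪m.1, v⟫ - m.2)
              ≤ (⟪m.1, v⟫ - ⟪m.1, z⟫) / (⟪m.1, v⟫ - m.2) * (⟪m.1, v⟫ - m.2) :=
                mul_le_mul_of_nonneg_right hkey (le_of_lt hgap)
            _ = ⟪m.1, v⟫ - ⟪m.1, z⟫ := div_mul_cancel₀ _ (ne_of_gt hgap)
        set y' : EuclideanSpace ℝ (Fin d) := v + sc⁻¹ • (z - v) with hy'def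
        have hy'inner : ∀ q : EuclideanSpace ℝ (Fin d) × ℝ,
            ⟪q.1, y'⟫ = ⟪q.1, v⟫ + sc⁻¹ * (⟪q.1, z⟫ - ⟪q.1, v⟫) := by
          intro q
          rw [hy'def, inner_add_right, real_inner_smul_right, inner_sub_right]
        have hy' : y' ∈ convexHull ℝ (↑T : Set (EuclideanSpace ℝ (Fin d))) := by
          apply hLcomp
          intro q hq
          rcases hLsplit q hq with hql | hqg
          · rw [hy'inner]
            have h1 := hAbd q hql
            have h2 : sc⁻¹ * (⟪q.1, z⟫ - ⟪q.1, v⟫) ≤ sc⁻¹ * (sc * (q.2 - ⟪q.1, v⟫)) :=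
              mul_le_mul_of_nonneg_left h1 (inv_nonneg.2 (le_of_lt hs0))
            have h3 : sc⁻¹ * (sc * (q.2 - ⟪q.1, v⟫)) = q.2 - ⟪q.1, v⟫ := by
              rw [← mul_assoc, inv_mul_cancel₀ (ne_of_gt hs0), one_mul]
            linarith
          · rw [hy'inner]
            have h1 := hBbd q hqg
            have h2 : ⟪q.1, z⟫ - ⟪q.1, v⟫ ≤ -(sc * (⟪q.1, v⟫ - q.2)) := by linarith
            have h3 : sc⁻¹ * (⟪q.1, z⟫ - ⟪q.1, v⟫) ≤ sc⁻¹ * (-(sc * (⟪q.1, v⟫ - q.2))) :=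
              mul_le_mul_of_nonneg_left h2 (inv_nonneg.2 (le_of_lt hs0))
            have h4 : sc⁻¹ * (-(sc * (⟪q.1, v⟫ - q.2))) = -(⟪q.1, v⟫ - q.2) := by
              rw [mul_neg, ← mul_assoc, inv_mul_cancel₀ (ne_of_gt hs0), one_mul]
            linarith
        have hzeq : z = (1 - sc) • v + sc • y' := by
          rw [hy'def, smul_add, smul_inv_smul₀ (ne_of_gt hs0)]
          module
        rw [hsub]
        have hconv := convex_convexHull ℝ (insert v (↑T : Set (EuclideanSpace ℝ (Fin d))))
        have hvm : v ∈ convexHull ℝ (insert v (↑T : Set (EuclideanSpace ℝ (Fin d)))) :=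
          subset_convexHull ℝ _ (Set.mem_insert v _)
        have hym : y' ∈ convexHull ℝ (insert v (↑T : Set (EuclideanSpace ℝ (Fin d)))) :=
          convexHull_mono (Set.subset_insert v _) hy'
        have hmem := hconv hvm hym (by linarith : (0:ℝ) ≤ 1 - sc) (le_of_lt hs0) (by ring)
        rw [← hzeq] at hmem
        exact hmem
    · intro i
      have h1 := (hLbox i).1
      have h2 := (hLbox i).2
      have hb1 : (EuclideanSpace.single i (1:ℝ), M) ∈ Lle := by
        rw [hLle, mem_filter]
        refine ⟨h1, ?_⟩
        simp only [EuclideanSpace.inner_single_left, starRingEnd_apply, star_one, one_mul]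
        exact le_of_lt ((abs_lt.1 (hM v (mem_cons_self v T) i)).2)
      have hb2 : (EuclideanSpace.single i (-1:ℝ), M) ∈ Lle := by
        rw [hLle, mem_filter]
        refine ⟨h2, ?_⟩
        simp only [EuclideanSpace.inner_single_left, starRingEnd_apply, star_neg, star_one, neg_mul, one_mul]
        linarith [(abs_lt.1 (hM v (mem_cons_self v T) i)).1]
      exact ⟨mem_union_left _ hb1, mem_union_left _ hb2⟩

/-- Weyl with unit normals. -/
theorem weyl_unit (T : Finset (EuclideanSpace ℝ (Fin d))) (hT : T.Nonempty) :
    ∃ L : Finset (EuclideanSpace ℝ (Fin d) × ℝ),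
      (∀ q ∈ L, ‖q.1‖ = 1) ∧
      (∀ q ∈ L, ∀ z ∈ convexHull ℝ (T : Set (EuclideanSpace ℝ (Fin d))), ⟪q.1, z⟫ ≤ q.2) ∧
      (∀ z : EuclideanSpace ℝ (Fin d),
        (∀ q ∈ L, ⟪q.1, z⟫ ≤ q.2) → z ∈ convexHull ℝ (T : Set (EuclideanSpace ℝ (Fin d)))) := by
  classical
  set M : ℝ := 1 + T.sup' hT (fun v => ‖v‖) with hMdef
  have hM : ∀ v ∈ T, ∀ i, |v i| < M := by
    intro v hv i
    have h1 : |v i| ≤ ‖v‖ := abs_coord_le_norm v i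
    have h2 : ‖v‖ ≤ T.sup' hT (fun v => ‖v‖) := Finset.le_sup' _ hv
    rw [hMdef]; linarith
  obtain ⟨L, hLval, hLcomp, _⟩ := weyl_rep M T hT hM
  set L₀ : Finset (EuclideanSpace ℝ (Fin d) × ℝ) := L.filter (fun q => q.1 ≠ 0) with hL₀
  refine ⟨L₀.image (fun q => (‖q.1‖⁻¹ • q.1, ‖q.1‖⁻¹ * q.2)), ?_, ?_, ?_⟩
  · intro q hq
    obtain ⟨q₀, hq₀, rfl⟩ := Finset.mem_image.1 hq
    have hne : q₀.1 ≠ 0 := (Finset.mem_filter.1 hq₀).2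
    have : ‖q₀.1‖ ≠ 0 := norm_ne_zero_iff.2 hne
    simp only [norm_smul, norm_inv, norm_norm]
    field_simp
  · intro q hq z hz
    obtain ⟨q₀, hq₀, rfl⟩ := Finset.mem_image.1 hq
    have h1 := hLval q₀ (Finset.mem_filter.1 hq₀).1 z hz
    simp only [real_inner_smul_left]
    exact mul_le_mul_of_nonneg_left h1 (inv_nonneg.2 (norm_nonneg _))
  · intro z hz
    apply hLcomp
    intro q hq
    by_cases hq1 : q.1 = 0
    · obtain ⟨v, hv⟩ := hT
      have := hLval q hq v (subset_convexHull ℝ _ (Finset.mem_coe.2 hv))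
      rw [hq1] at this ⊢
      simpa using (by simpa using this : (0:ℝ) ≤ q.2)
    · have hmem : (‖q.1‖⁻¹ • q.1, ‖q.1‖⁻¹ * q.2) ∈
          L₀.image (fun q => (‖q.1‖⁻¹ • q.1, ‖q.1‖⁻¹ * q.2)) :=
        Finset.mem_image_of_mem _ (Finset.mem_filter.2 ⟨hq, hq1⟩)
      have h1 := hz _ hmem
      simp only [real_inner_smul_left] at h1
      have hnorm : (0:ℝ) < ‖q.1‖ := norm_pos_iff.2 hq1
      have h2 := mul_le_mul_of_nonneg_left h1 (le_of_lt hnorm)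
      rw [← mul_assoc, ← mul_assoc, mul_inv_cancel₀ (ne_of_gt hnorm), one_mul, one_mul] at h2
      exact h2

/-- Quantitative single-generator lemma: the `w`-mass needed to represent a point `y` of
`conv (T ∪ {w})` is controlled by the distance from `y` to `conv T`. -/
theorem single_gen (T : Finset (EuclideanSpace ℝ (Fin d))) (hT : T.Nonempty)
    (w : EuclideanSpace ℝ (Fin d)) :
    ∃ C : ℝ, 0 ≤ C ∧ ∀ y ∈ convexHull ℝ (insert w (T : Set (EuclideanSpace ℝ (Fin d)))),
      ∃ a : ℝ, ∃ q : EuclideanSpace ℝ (Fin d), 0 ≤ a ∧ a ≤ 1 ∧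
        q ∈ convexHull ℝ (T : Set (EuclideanSpace ℝ (Fin d))) ∧
        y = a • w + (1 - a) • q ∧
        ∀ x ∈ convexHull ℝ (T : Set (EuclideanSpace ℝ (Fin d))), a ≤ C * ‖y - x‖ := by
  classical
  by_cases hw : w ∈ convexHull ℝ (T : Set (EuclideanSpace ℝ (Fin d)))
  · refine ⟨0, le_refl 0, ?_⟩
    intro y hy
    have hsub : convexHull ℝ (insert w (T : Set (EuclideanSpace ℝ (Fin d)))) ⊆
        convexHull ℝ (T : Set (EuclideanSpace ℝ (Fin d))) := by
      apply convexHull_min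
      · intro p hp
        rcases Set.mem_insert_iff.1 hp with rfl | hp
        · exact hw
        · exact subset_convexHull ℝ _ hp
      · exact convex_convexHull ℝ _
    refine ⟨0, y, le_refl 0, zero_le_one, hsub hy, by simp, ?_⟩
    intro x hx
    simp
  · obtain ⟨L, hLunit, hLval, hLcomp⟩ := weyl_unit T hT
    have hLw : ∃ q ∈ L, q.2 < ⟪q.1, w⟫ := by
      by_contra h
      push_neg at h
      exact hw (hLcomp w h)
    set Lw : Finset (EuclideanSpace ℝ (Fin d) × ℝ) := L.filter (fun q => q.2 < ⟪q.1, w⟫) with hLwdef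
    have hLwne : Lw.Nonempty := by
      obtain ⟨q, hq, hq2⟩ := hLw
      exact ⟨q, Finset.mem_filter.2 ⟨hq, hq2⟩⟩
    set ρ : ℝ := Lw.inf' hLwne (fun q => ⟪q.1, w⟫ - q.2) with hρdef
    have hρ : 0 < ρ := by
      rw [hρdef, Finset.lt_inf'_iff]
      intro q hq
      have := (Finset.mem_filter.1 hq).2
      linarith
    refine ⟨ρ⁻¹, inv_nonneg.2 (le_of_lt hρ), ?_⟩
    intro y hy
    -- the compact set of admissible pairs (a, q)
    set S2 : Set (ℝ × EuclideanSpace ℝ (Fin d)) :=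
      {p | p.1 ∈ Set.Icc (0:ℝ) 1 ∧ p.2 ∈ convexHull ℝ (T : Set (EuclideanSpace ℝ (Fin d))) ∧
        y = p.1 • w + (1 - p.1) • p.2} with hS2def
    have hS2ne : S2.Nonempty := by
      rw [convexHull_insert (Finset.coe_nonempty.2 hT)] at hy
      rw [mem_convexJoin] at hy
      obtain ⟨xw, hxw, q, hq, hseg⟩ := hy
      rw [Set.mem_singleton_iff] at hxw
      subst hxw
      obtain ⟨a, b, ha, hb, hab, habq⟩ := hseg
      exact ⟨(a, q), ⟨ha, by linarith⟩, hq, by rw [← habq]; congr 1; rw [← hab]; ring_nf⟩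
    have hS2cpt : IsCompact S2 := by
      have h1 : IsCompact ((Set.Icc (0:ℝ) 1) ×ˢ (convexHull ℝ (T : Set (EuclideanSpace ℝ (Fin d))))) :=
        isCompact_Icc.prod ((T.finite_toSet).isCompact_convexHull ℝ)
      have h2 : IsClosed {p : ℝ × EuclideanSpace ℝ (Fin d) | y = p.1 • w + (1 - p.1) • p.2} := by
        apply isClosed_eq continuous_const
        exact ((continuous_fst.smul continuous_const).add
          ((continuous_const.sub continuous_fst).smul continuous_snd))
      have heq : S2 = ((Set.Icc (0:ℝ) 1) ×ˢ (convexHull ℝ (T : Set (EuclideanSpace ℝ (Fin d))))) ∩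
          {p | y = p.1 • w + (1 - p.1) • p.2} := by
        ext p
        simp only [hS2def, Set.mem_inter_iff, Set.mem_prod, Set.mem_setOf_eq]
        tauto
      rw [heq]
      exact h1.inter_right h2
    set K : Set ℝ := Prod.fst '' S2 with hKdef
    have hKcpt : IsCompact K := hS2cpt.image continuous_fst
    have hKne : K.Nonempty := hS2ne.image _
    set a : ℝ := sInf K with hadef
    have haK : a ∈ K := hKcpt.sInf_mem hKne
    have hamin : ∀ b ∈ K, a ≤ b := fun b hb => csInf_le hKcpt.bddBelow hb
    obtain ⟨⟨a', q₁⟩, hS2mem, ha'⟩ := haK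
    obtain ⟨⟨ha0, ha1⟩, hq₁, heq⟩ := hS2mem
    simp only at ha'
    subst ha'
    replace ha0 : (0:ℝ) ≤ a := ha0
    replace ha1 : a ≤ 1 := ha1
    replace hq₁ : q₁ ∈ convexHull ℝ (T : Set (EuclideanSpace ℝ (Fin d))) := hq₁
    replace heq : y = a • w + (1 - a) • q₁ := heq
    by_cases hapos : a ≤ 0
    · have ha0' : a = 0 := le_antisymm hapos ha0
      refine ⟨a, q₁, ha0, ha1, hq₁, heq, ?_⟩
      intro x hx
      rw [ha0']
      positivity
    · push_neg at hapos
      -- key claim : some constraint is tight at q₁ and violated at y (when a < 1),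
      -- giving a * ρ ≤ ⟪n.1, y⟫ - n.2 for some n ∈ Lw.
      have hkey : ∃ n ∈ Lw, a * ρ ≤ ⟪n.1, y⟫ - n.2 := by
        by_cases ha1' : 1 ≤ a
        · have haa : a = 1 := le_antisymm ha1 ha1'
          have hyw : y = w := by rw [heq, haa]; simp
          obtain ⟨n, hn⟩ := hLwne
          refine ⟨n, hn, ?_⟩
          have h1 : ρ ≤ ⟪n.1, w⟫ - n.2 := Finset.inf'_le _ hn
          rw [haa, one_mul, hyw]
          exact h1
        · push_neg at ha1'
          -- points strictly between y and q₁ are not in conv T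
          have hxi : ∀ t : ℝ, 0 < t → t < 1 →
              ((1-t) • y + t • q₁) ∉ convexHull ℝ (T : Set (EuclideanSpace ℝ (Fin d))) := by
            intro t ht0 ht1 hmem
            set D : ℝ := 1 - a * (1 - t) with hDdef
            have hD : 0 < D := by nlinarith
            set a'' : ℝ := a * t / D with ha''def
            have ha''0 : 0 ≤ a'' := by positivity
            have hDne : D ≠ 0 := ne_of_gt hD
            have ha''lt : a'' < a := by
              rw [ha''def, div_lt_iff₀ hD]
              have h6 : t < D := by
                rw [hDdef]
                nlinarith [mul_lt_mul_of_pos_right ha1' (show (0:ℝ) < 1 - t by linarith)]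
              exact mul_lt_mul_of_pos_left h6 hapos
            have hrep : y = a'' • w + (1 - a'') • ((1-t) • y + t • q₁) := by
              apply smul_right_injective (EuclideanSpace ℝ (Fin d)) hDne
              have e1 : D * a'' = a * t := by rw [ha''def]; field_simp
              have e2 : D * (1 - a'') = 1 - a := by
                have h7 : D * (1 - a'') = D - D * a'' := by ring
                rw [h7, e1, hDdef]; ring
              have hq₁y : (1 - a) • q₁ = y - a • w := by rw [heq]; module
              show D • y = D • (a'' • w + (1 - a'') • ((1-t) • y + t • q₁))
              calc D • y = (1 - a*(1-t)) • y := by rw [hDdef]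
                _ = (a * t) • w + (1 - a) • ((1-t) • y + t • q₁) := by
                    rw [smul_add, smul_smul, smul_smul,
                      show ((1:ℝ)-a)*t = t*(1-a) by ring, ← smul_smul t (1-a), hq₁y]
                    module
                _ = (D * a'') • w + (D * (1 - a'')) • ((1-t) • y + t • q₁) := by rw [e1, e2]
                _ = D • (a'' • w + (1 - a'') • ((1-t) • y + t • q₁)) := by
                    module
            have : a ≤ a'' := hamin a'' ⟨(a'', (1-t) • y + t • q₁),
              ⟨⟨ha''0, le_of_lt (lt_of_lt_of_le ha''lt ha1)⟩, hmem, hrep⟩, rfl⟩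
            linarith
          -- find a constraint tight at q₁ and violated at y
          have hLne : L.Nonempty := by
            obtain ⟨n, hn⟩ := hLwne
            exact ⟨n, (Finset.mem_filter.1 hn).1⟩
          have htight : ∃ n ∈ L, ⟪n.1, q₁⟫ = n.2 ∧ n.2 < ⟪n.1, y⟫ := by
            by_contra hcontra
            push_neg at hcontra
            -- each constraint with g₀ > 0 has g₁ < 0; build t* where all constraints hold
            set τ : EuclideanSpace ℝ (Fin d) × ℝ → ℝ := fun n =>
              if 0 < ⟪n.1, y⟫ - n.2 then
                (⟪n.1, y⟫ - n.2) / ((⟪n.1, y⟫ - n.2) - (⟪n.1, q₁⟫ - n.2)) else 0 with hτdef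
            have hτlt : ∀ n ∈ L, τ n < 1 := by
              intro n hn
              simp only [hτdef]
              split_ifs with hpos
              · have hq₁le : ⟪n.1, q₁⟫ ≤ n.2 := hLval n hn q₁ hq₁
                have hg1 : ⟪n.1, q₁⟫ - n.2 < 0 := by
                  rcases lt_or_eq_of_le hq₁le with h | h
                  · linarith
                  · exfalso; have := hcontra n hn h; linarith
                rw [div_lt_one (by linarith)]
                linarith
              · exact one_pos
            set tstar : ℝ := max (L.sup' hLne τ) (1/2) with htstar
            have ht0 : 0 < tstar := lt_of_lt_of_le one_half_pos (le_max_right _ _)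
            have ht1 : tstar < 1 := by
              rw [htstar, max_lt_iff]
              constructor
              · rw [Finset.sup'_lt_iff]
                intro n hn
                exact hτlt n hn
              · norm_num
            apply hxi tstar ht0 ht1
            apply hLcomp
            intro n hn
            have hg1le : ⟪n.1, q₁⟫ - n.2 ≤ 0 := by
              have := hLval n hn q₁ hq₁; linarith
            have hinner : ⟪n.1, (1 - tstar) • y + tstar • q₁⟫ =
                (1 - tstar) * ⟪n.1, y⟫ + tstar * ⟪n.1, q₁⟫ := by
              rw [inner_add_right, real_inner_smul_right, real_inner_smul_right]
            rw [hinner]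
            by_cases hg0 : 0 < ⟪n.1, y⟫ - n.2
            · have hq₁lt : ⟪n.1, q₁⟫ - n.2 < 0 := by
                rcases lt_or_eq_of_le hg1le with h | h
                · exact h
                · exfalso
                  have := hcontra n hn (by linarith)
                  linarith
              have hτn : τ n = (⟪n.1, y⟫ - n.2) / ((⟪n.1, y⟫ - n.2) - (⟪n.1, q₁⟫ - n.2)) := by
                simp only [hτdef]; rw [if_pos hg0]
              have hden : 0 < (⟪n.1, y⟫ - n.2) - (⟪n.1, q₁⟫ - n.2) := by linarith
              have hts : τ n ≤ tstar :=
                le_trans (Finset.le_sup' τ hn) (le_max_left _ _)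
              have h5 : (⟪n.1, y⟫ - n.2) ≤ tstar * ((⟪n.1, y⟫ - n.2) - (⟪n.1, q₁⟫ - n.2)) := by
                rw [hτn] at hts
                calc ⟪n.1, y⟫ - n.2
                    = (⟪n.1, y⟫ - n.2) / ((⟪n.1, y⟫ - n.2) - (⟪n.1, q₁⟫ - n.2)) *
                      ((⟪n.1, y⟫ - n.2) - (⟪n.1, q₁⟫ - n.2)) :=
                      (div_mul_cancel₀ _ (ne_of_gt hden)).symm
                  _ ≤ tstar * ((⟪n.1, y⟫ - n.2) - (⟪n.1, q₁⟫ - n.2)) :=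
                      mul_le_mul_of_nonneg_right hts (le_of_lt hden)
              nlinarith
            · push_neg at hg0
              nlinarith [mul_nonneg (le_of_lt ht0) (neg_nonneg.2 hg1le),
                mul_nonneg (by linarith : (0:ℝ) ≤ 1 - tstar) (neg_nonneg.2 (by linarith : ⟪n.1, y⟫ - n.2 ≤ 0))]
          obtain ⟨n, hn, htq, hty⟩ := htight
          have hyval : ⟪n.1, y⟫ - n.2 = a * (⟪n.1, w⟫ - n.2) := by
            have : ⟪n.1, y⟫ = a * ⟪n.1, w⟫ + (1 - a) * ⟪n.1, q₁⟫ := by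
              rw [heq, inner_add_right, real_inner_smul_right, real_inner_smul_right]
            rw [this, htq]
            ring
          have hwgap : 0 < ⟪n.1, w⟫ - n.2 := by
            by_contra habs
            push_neg at habs
            nlinarith
          have hnLw : n ∈ Lw := Finset.mem_filter.2 ⟨hn, by linarith⟩
          refine ⟨n, hnLw, ?_⟩
          have h1 : ρ ≤ ⟪n.1, w⟫ - n.2 := Finset.inf'_le _ hnLw
          rw [hyval]
          exact mul_le_mul_of_nonneg_left h1 (le_of_lt hapos)
      obtain ⟨n, hnLw, hbound⟩ := hkey
      refine ⟨a, q₁, ha0, ha1, hq₁, heq, ?_⟩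
      intro x hx
      have hnL : n ∈ L := (Finset.mem_filter.1 hnLw).1
      have hxle : ⟪n.1, x⟫ ≤ n.2 := hLval n hnL x hx
      have h2 : a * ρ ≤ ⟪n.1, y - x⟫ := by
        rw [inner_sub_right]
        linarith
      have h3 : ⟪n.1, y - x⟫ ≤ ‖y - x‖ := by
        have h4 := real_inner_le_norm n.1 (y - x)
        rw [hLunit n hnL, one_mul] at h4
        exact h4
      rw [inv_mul_eq_div, le_div_iff₀ hρ]
      linarith

local instance : DecidableEq (EuclideanSpace ℝ (Fin d)) := Classical.decEq _

/-- Hoffman-type lemma: any point `y` of `conv (I ∪ W)` admits a representation whose total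
mass outside `I` is controlled by `‖y - x‖` for any `x ∈ conv I`. -/
theorem outside_mass (I : Finset (EuclideanSpace ℝ (Fin d))) (hI : I.Nonempty)
    (W : Finset (EuclideanSpace ℝ (Fin d))) :
    ∃ C : ℝ, 0 ≤ C ∧
      ∀ y ∈ convexHull ℝ (↑(I ∪ W) : Set (EuclideanSpace ℝ (Fin d))),
        ∀ x ∈ convexHull ℝ (↑I : Set (EuclideanSpace ℝ (Fin d))),
          ∃ lam : EuclideanSpace ℝ (Fin d) → ℝ,
            (∀ v ∈ I ∪ W, 0 ≤ lam v) ∧ (∑ v ∈ I ∪ W, lam v = 1) ∧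
            (∑ v ∈ I ∪ W, lam v • v = y) ∧ (∑ v ∈ (I ∪ W) \ I, lam v ≤ C * ‖y - x‖) := by
  classical
  induction W using Finset.induction_on with
  | empty =>
    refine ⟨0, le_refl 0, ?_⟩
    intro y hy x hx
    rw [Finset.union_empty] at hy ⊢
    rw [Finset.convexHull_eq] at hy
    obtain ⟨wf, hw0, hw1, hwc⟩ := hy
    rw [Finset.centerMass_eq_of_sum_1 _ id hw1] at hwc
    simp only [id_eq] at hwc
    refine ⟨wf, hw0, hw1, hwc, ?_⟩
    simp
  | @insert w W hwW IH =>
    obtain ⟨C', hC'0, hC'⟩ := IH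
    by_cases hwI : w ∈ I
    · have hUeq : I ∪ insert w W = I ∪ W := by
        rw [Finset.union_insert, Finset.insert_eq_self.2 (Finset.mem_union_left W hwI)]
      rw [hUeq]
      exact ⟨C', hC'0, hC'⟩
    · set T : Finset (EuclideanSpace ℝ (Fin d)) := I ∪ W with hT
      have hTne : T.Nonempty := by
        obtain ⟨v, hv⟩ := hI
        exact ⟨v, Finset.mem_union_left W hv⟩
      have hwT : w ∉ T := by
        rw [hT, Finset.mem_union]
        rintro (h | h)
        exacts [hwI h, hwW h]
      obtain ⟨Cs, hCs0, hsg⟩ := single_gen T hTne w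
      set BI : ℝ := I.sup' hI (fun v => ‖v‖) with hBI
      have hBI0 : 0 ≤ BI := by
        obtain ⟨v, hv⟩ := hI
        exact le_trans (norm_nonneg v) (Finset.le_sup' _ hv)
      have hxbound : ∀ x ∈ convexHull ℝ (↑I : Set (EuclideanSpace ℝ (Fin d))), ‖x‖ ≤ BI := by
        intro x hx
        have hsub : convexHull ℝ (↑I : Set (EuclideanSpace ℝ (Fin d))) ⊆
            Metric.closedBall 0 BI := by
          apply convexHull_min
          · intro v hv
            rw [Metric.mem_closedBall, dist_zero_right]
            exact Finset.le_sup' _ (Finset.mem_coe.1 hv)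
          · exact convex_closedBall 0 BI
        have := hsub hx
        rwa [Metric.mem_closedBall, dist_zero_right] at this
      set DB : ℝ := ‖w‖ + BI with hDB
      have hDB0 : 0 ≤ DB := by positivity
      refine ⟨2*Cs + Cs + 2*C'*(1 + Cs*DB), by positivity, ?_⟩
      intro y hy x hx
      have hSins : I ∪ insert w W = insert w T := by rw [hT, Finset.union_insert]
      rw [hSins] at hy ⊢
      rw [Finset.coe_insert] at hy
      have hxT : x ∈ convexHull ℝ (↑T : Set (EuclideanSpace ℝ (Fin d))) :=
        convexHull_mono (by rw [hT]; exact_mod_cast Finset.coe_subset.2 Finset.subset_union_left) hx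
      obtain ⟨a, q, ha0, ha1, hqT, hyeq, habd⟩ := hsg y hy
      have hwx : ‖w - x‖ ≤ DB := by
        calc ‖w - x‖ ≤ ‖w‖ + ‖x‖ := norm_sub_le w x
          _ ≤ ‖w‖ + BI := by linarith [hxbound x hx]
      have haxb : a ≤ Cs * ‖y - x‖ := habd x hxT
      have hyx0 : (0:ℝ) ≤ ‖y - x‖ := norm_nonneg _
      by_cases hahalf : a ≤ 1/2
      · obtain ⟨lam', hl0, hl1, hlv, hlo⟩ := hC' q hqT x hx
        set lam : EuclideanSpace ℝ (Fin d) → ℝ :=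
          fun v => (if v = w then a else 0) + (1-a) * (if v ∈ T then lam' v else 0) with hlam
        have hlamw : lam w = a := by simp [hlam, hwT]
        have hlamT : ∀ v ∈ T, lam v = (1-a) * lam' v := by
          intro v hv
          have hvw : v ≠ w := fun h => hwT (h ▸ hv)
          simp [hlam, hvw, hv]
        have hsumT : ∑ v ∈ T, lam v = (1-a) * ∑ v ∈ T, lam' v := by
          rw [Finset.mul_sum]
          exact Finset.sum_congr rfl hlamT
        refine ⟨lam, ?_, ?_, ?_, ?_⟩
        · intro v hv
          rcases Finset.mem_insert.1 hv with rfl | hv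
          · rw [hlamw]; exact ha0
          · rw [hlamT v hv]
            exact mul_nonneg (by linarith) (hl0 v hv)
        · rw [Finset.sum_insert hwT, hlamw, hsumT, hl1]
          ring
        · rw [Finset.sum_insert hwT, hlamw]
          have : ∑ v ∈ T, lam v • v = (1-a) • q := by
            rw [← hlv, Finset.smul_sum]
            apply Finset.sum_congr rfl
            intro v hv
            rw [hlamT v hv, smul_smul]
          rw [this, hyeq]
        · have hsd : (insert w T) \ I = insert w (T \ I) :=
            Finset.insert_sdiff_of_notMem _ hwI
          have hwTI : w ∉ T \ I := fun h => hwT (Finset.mem_sdiff.1 h).1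
          rw [hsd, Finset.sum_insert hwTI, hlamw]
          have h1 : ∑ v ∈ T \ I, lam v = (1-a) * ∑ v ∈ T \ I, lam' v := by
            rw [Finset.mul_sum]
            exact Finset.sum_congr rfl (fun v hv => hlamT v (Finset.mem_sdiff.1 hv).1)
          have h2 : (0:ℝ) ≤ ∑ v ∈ T \ I, lam' v :=
            Finset.sum_nonneg (fun v hv => hl0 v (Finset.mem_sdiff.1 hv).1)
          have h3 : ∑ v ∈ T \ I, lam v ≤ ∑ v ∈ T \ I, lam' v := by
            rw [h1]; nlinarith
          -- bound ‖q - x‖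
          have hsmul : (1-a) • (q - x) = (y - x) - a • (w - x) := by
            rw [hyeq]; module
          have hnq : (1-a) * ‖q - x‖ ≤ ‖y - x‖ + a * ‖w - x‖ := by
            have e1 : ‖(1-a) • (q - x)‖ = (1-a) * ‖q - x‖ := by
              rw [norm_smul, Real.norm_eq_abs, abs_of_nonneg (by linarith : (0:ℝ) ≤ 1-a)]
            have e2 : ‖a • (w - x)‖ = a * ‖w - x‖ := by
              rw [norm_smul, Real.norm_eq_abs, abs_of_nonneg ha0]
            calc (1-a) * ‖q - x‖ = ‖(1-a) • (q - x)‖ := e1.symm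
              _ = ‖(y - x) - a • (w - x)‖ := by rw [hsmul]
              _ ≤ ‖y - x‖ + ‖a • (w - x)‖ := norm_sub_le _ _
              _ = ‖y - x‖ + a * ‖w - x‖ := by rw [e2]
          have hqx : ‖q - x‖ ≤ 2 * (1 + Cs * DB) * ‖y - x‖ := by
            have h4 : a * ‖w - x‖ ≤ Cs * ‖y - x‖ * DB :=
              mul_le_mul haxb hwx (norm_nonneg _) (by positivity)
            nlinarith [norm_nonneg (q - x)]
          calc a + ∑ v ∈ T \ I, lam v ≤ Cs * ‖y - x‖ + C' * ‖q - x‖ := by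
                have := le_trans h3 hlo
                linarith
            _ ≤ Cs * ‖y - x‖ + C' * (2 * (1 + Cs * DB) * ‖y - x‖) := by
                have := mul_le_mul_of_nonneg_left hqx hC'0
                linarith
            _ ≤ (2*Cs + Cs + 2*C'*(1 + Cs*DB)) * ‖y - x‖ := by nlinarith
      · push_neg at hahalf
        have h1 : 1 ≤ 2 * Cs * ‖y - x‖ := by nlinarith
        rw [← Finset.coe_insert, Finset.convexHull_eq] at hy
        obtain ⟨wf, hw0, hw1, hwc⟩ := hy
        rw [Finset.centerMass_eq_of_sum_1 _ id hw1] at hwc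
        simp only [id_eq] at hwc
        refine ⟨wf, hw0, hw1, hwc, ?_⟩
        have h2 : ∑ v ∈ insert w T \ I, wf v ≤ ∑ v ∈ insert w T, wf v :=
          Finset.sum_le_sum_of_subset_of_nonneg Finset.sdiff_subset (fun v hv _ => hw0 v hv)
        rw [hw1] at h2
        nlinarith [mul_nonneg (show (0:ℝ) ≤ Cs + 2*C'*(1 + Cs*DB) by positivity) hyx0]



/-- the weak proximal oracle for a compact convex polytope `ℱ ⊆ ℝᵈ`.
There is a constant `λ ≥ 1`, depending only on `ℱ`, with the following property: for every
`p`, `c > 0`, every `x ∈ ℱ` given as a convex combination of vertices `z₁,…,z_t` of `ℱ`,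
and every vertex `z_{t+1}` minimizing `⟨·, p⟩` over `ℱ`, any optimal solution `γ*` of the
quadratic problem over the simplex yields a point `v = Σ γ*ᵢ zᵢ` satisfying
`⟨v,p⟩ + (c/2)‖v − x‖² ≤ ⟨u,p⟩ + (λc/2)‖u − x‖²` for all `u ∈ ℱ`. -/
theorem polytope_wpo (d : ℕ) (F : Set (EuclideanSpace ℝ (Fin d)))
    (hpoly : ∃ s : Finset (EuclideanSpace ℝ (Fin d)), F = convexHull ℝ (s : Set (EuclideanSpace ℝ (Fin d))))
    (hFcpt : IsCompact F) (hFconv : Convex ℝ F) :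
    ∃ lam : ℝ, 1 ≤ lam ∧
      ∀ (p : EuclideanSpace ℝ (Fin d)) (c : ℝ), 0 < c →
      ∀ (t : ℕ) (z : Fin (t + 1) → EuclideanSpace ℝ (Fin d)) (x : EuclideanSpace ℝ (Fin d)),
        -- `z₁,…,z_t` are vertices of `ℱ` and `x` is a convex combination of them
        (∀ i : Fin t, z i.castSucc ∈ Set.extremePoints ℝ F) →
        (∃ μ : Fin t → ℝ, (∀ i, 0 ≤ μ i) ∧ ∑ i, μ i = 1 ∧
          x = ∑ i : Fin t, μ i • z i.castSucc) →
        -- `z_{t+1}` is a vertex of `ℱ` minimizing `⟨·, p⟩` over `ℱ`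
        z (Fin.last t) ∈ Set.extremePoints ℝ F →
        (∀ u ∈ F, ⟪z (Fin.last t), p⟫ ≤ ⟪u, p⟫) →
        -- `γ*` is optimal for the quadratic problem over the simplex
        ∀ γs : Fin (t + 1) → ℝ, (∀ i, 0 ≤ γs i) → ∑ i, γs i = 1 →
          (∀ γ : Fin (t + 1) → ℝ, (∀ i, 0 ≤ γ i) → ∑ i, γ i = 1 →
            ⟪∑ i, γs i • z i, p⟫ + c / 2 * ‖(∑ i, γs i • z i) - x‖ ^ 2 ≤
              ⟪∑ i, γ i • z i, p⟫ + c / 2 * ‖(∑ i, γ i • z i) - x‖ ^ 2) →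
          ∀ u ∈ F,
            ⟪∑ i, γs i • z i, p⟫ + c / 2 * ‖(∑ i, γs i • z i) - x‖ ^ 2 ≤
              ⟪u, p⟫ + lam * c / 2 * ‖u - x‖ ^ 2 := by
  classical
  obtain ⟨s₀, hF⟩ := hpoly
  by_cases hs₀ : s₀.Nonempty
  · -- main case
    set Mn : ℝ := s₀.sup' hs₀ (fun v => ‖v‖) with hMndef
    have hMn0 : 0 ≤ Mn := by
      obtain ⟨v, hv⟩ := hs₀
      exact le_trans (norm_nonneg v) (Finset.le_sup' _ hv)
    have H : ∀ J : Finset (EuclideanSpace ℝ (Fin d)), ∃ C : ℝ, 0 ≤ C ∧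
        (J.Nonempty → J ⊆ s₀ →
          ∀ y ∈ convexHull ℝ (↑s₀ : Set (EuclideanSpace ℝ (Fin d))),
            ∀ x ∈ convexHull ℝ (↑J : Set (EuclideanSpace ℝ (Fin d))),
              ∃ lam : EuclideanSpace ℝ (Fin d) → ℝ,
                (∀ v ∈ s₀, 0 ≤ lam v) ∧ (∑ v ∈ s₀, lam v = 1) ∧
                (∑ v ∈ s₀, lam v • v = y) ∧ (∑ v ∈ s₀ \ J, lam v ≤ C * ‖y - x‖)) := by
      intro J
      by_cases h : J.Nonempty ∧ J ⊆ s₀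
      · obtain ⟨C, hC0, hmain⟩ := outside_mass J h.1 (s₀ \ J)
        simp only [Finset.union_sdiff_of_subset h.2] at hmain
        exact ⟨C, hC0, fun _ _ => hmain⟩
      · exact ⟨0, le_refl 0, fun h1 h2 => absurd ⟨h1, h2⟩ h⟩
    choose Cof hCof0 hCof using H
    have hpowne : (s₀.powerset).Nonempty := ⟨∅, Finset.empty_mem_powerset s₀⟩
    set Cmax : ℝ := max ((s₀.powerset).sup' hpowne Cof) 0 with hCmaxdef
    have hCmax0 : 0 ≤ Cmax := le_max_right _ _
    have hCmaxI : ∀ J ∈ s₀.powerset, Cof J ≤ Cmax :=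
      fun J hJ => le_trans (Finset.le_sup' Cof hJ) (le_max_left _ _)
    set K : ℝ := 1 + 2 * Mn * Cmax with hKdef
    have hK1 : 1 ≤ K := by rw [hKdef]; nlinarith
    refine ⟨K^2, by nlinarith, ?_⟩
    intro p c hc t z x hzext hxrep hζext hζmin γs hγs0 hγs1 hopt u hu
    obtain ⟨μ, hμ0, hμ1, hxeq⟩ := hxrep
    have ht0 : 0 < t := by
      rcases Nat.eq_zero_or_pos t with h | h
      · exfalso; subst h; simpa using hμ1
      · exact h
    set ζ : EuclideanSpace ℝ (Fin d) := z (Fin.last t) with hζdef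
    set I : Finset (EuclideanSpace ℝ (Fin d)) :=
      Finset.image (fun i : Fin t => z i.castSucc) Finset.univ with hIdef
    have hIne : I.Nonempty :=
      ⟨z (⟨0, ht0⟩ : Fin t).castSucc, Finset.mem_image_of_mem _ (Finset.mem_univ _)⟩
    have hext_sub : Set.extremePoints ℝ F ⊆ (↑s₀ : Set (EuclideanSpace ℝ (Fin d))) := by
      rw [hF]; exact extremePoints_convexHull_subset
    have hIs : I ⊆ s₀ := by
      intro v hv
      obtain ⟨i, _, rfl⟩ := Finset.mem_image.1 hv
      exact Finset.mem_coe.1 (hext_sub (hzext i))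
    have hζs : ζ ∈ s₀ := Finset.mem_coe.1 (hext_sub hζext)
    have hxI : x ∈ convexHull ℝ (↑I : Set (EuclideanSpace ℝ (Fin d))) := by
      rw [hxeq]
      have h := Finset.centerMass_mem_convexHull (Finset.univ : Finset (Fin t))
        (w := μ) (fun i _ => hμ0 i) (by rw [hμ1]; exact one_pos)
        (z := fun i => z i.castSucc)
        (fun i _ => Finset.mem_coe.2 (Finset.mem_image_of_mem (fun j : Fin t => z j.castSucc) (Finset.mem_univ i)))
      rwa [Finset.centerMass_eq_of_sum_1 _ _ hμ1] at h
    have hus₀ : u ∈ convexHull ℝ (↑s₀ : Set (EuclideanSpace ℝ (Fin d))) := by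
      rw [hF] at hu; exact hu
    -- representation of u with small outside mass
    obtain ⟨lb, hlb0, hlb1, hlbv, hlbo⟩ := hCof I hIne hIs u hus₀ x hxI
    have hlbo' : ∑ v ∈ s₀ \ I, lb v ≤ Cmax * ‖u - x‖ := by
      have h1 : Cof I ≤ Cmax := hCmaxI I (Finset.mem_powerset.2 hIs)
      calc ∑ v ∈ s₀ \ I, lb v ≤ Cof I * ‖u - x‖ := hlbo
        _ ≤ Cmax * ‖u - x‖ := mul_le_mul_of_nonneg_right h1 (norm_nonneg _)
    -- index assignment
    set idx : EuclideanSpace ℝ (Fin d) → Fin (t+1) := fun v =>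
      if h : ∃ j : Fin t, z j.castSucc = v then h.choose.castSucc else Fin.last t with hidxdef
    have hzidx : ∀ v, z (idx v) = (if v ∈ I then v else ζ) := by
      intro v
      by_cases hv : v ∈ I
      · obtain ⟨j, _, hj⟩ := Finset.mem_image.1 hv
        have hex : ∃ j : Fin t, z j.castSucc = v := ⟨j, hj⟩
        rw [hidxdef]
        simp only [dif_pos hex]
        rw [if_pos hv]
        exact hex.choose_spec
      · have hnex : ¬ ∃ j : Fin t, z j.castSucc = v := by
          rintro ⟨j, rfl⟩
          exact hv (Finset.mem_image_of_mem (fun j : Fin t => z j.castSucc) (Finset.mem_univ j))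
        rw [hidxdef]
        simp only [dif_neg hnex]
        rw [if_neg hv]
    -- the comparison point
    set wpt : EuclideanSpace ℝ (Fin d) :=
      ∑ v ∈ s₀, lb v • (if v ∈ I then v else ζ) with hwptdef
    set γ : Fin (t+1) → ℝ := fun i => ∑ v ∈ s₀, lb v * (if idx v = i then 1 else 0) with hγdef
    have hγ0 : ∀ i, 0 ≤ γ i := by
      intro i
      apply Finset.sum_nonneg
      intro v hv
      have := hlb0 v hv
      split_ifs <;> simp <;> linarith
    have hγ1 : ∑ i, γ i = 1 := by
      rw [hγdef, Finset.sum_comm]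
      have hper : ∀ v ∈ s₀, (∑ i : Fin (t+1), lb v * (if idx v = i then 1 else 0)) = lb v := by
        intro v _
        rw [← Finset.mul_sum, Finset.sum_ite_eq]
        simp
      rw [Finset.sum_congr rfl hper, hlb1]
    have hγv : ∑ i, γ i • z i = wpt := by
      rw [hγdef, hwptdef]
      have h1 : ∀ i : Fin (t+1), (∑ v ∈ s₀, lb v * (if idx v = i then 1 else 0)) • z i
          = ∑ v ∈ s₀, (if idx v = i then lb v • z i else 0) := by
        intro i
        rw [Finset.sum_smul]
        apply Finset.sum_congr rfl
        intro v hv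
        split_ifs with h
        · simp
        · simp
      calc ∑ i, (∑ v ∈ s₀, lb v * (if idx v = i then 1 else 0)) • z i
          = ∑ i, ∑ v ∈ s₀, (if idx v = i then lb v • z i else 0) := by
            apply Finset.sum_congr rfl; intro i _; exact h1 i
        _ = ∑ v ∈ s₀, ∑ i, (if idx v = i then lb v • z i else 0) := Finset.sum_comm
        _ = ∑ v ∈ s₀, lb v • z (idx v) := by
            apply Finset.sum_congr rfl
            intro v hv
            rw [Finset.sum_ite_eq]
            simp
        _ = ∑ v ∈ s₀, lb v • (if v ∈ I then v else ζ) := by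
            apply Finset.sum_congr rfl
            intro v hv
            rw [hzidx v]
    have hkey := hopt γ hγ0 hγ1
    rw [hγv] at hkey
    -- value comparison
    have hval : ⟪wpt, p⟫ ≤ ⟪u, p⟫ := by
      rw [hwptdef, ← hlbv, sum_inner, sum_inner]
      apply Finset.sum_le_sum
      intro v hv
      rw [real_inner_smul_left, real_inner_smul_left]
      apply mul_le_mul_of_nonneg_left _ (hlb0 v hv)
      split_ifs with h
      · exact le_refl _
      · apply hζmin
        rw [hF]
        exact subset_convexHull ℝ _ (Finset.mem_coe.2 hv)
    -- distance comparison
    have hdiff : wpt - u = ∑ v ∈ s₀ \ I, lb v • (ζ - v) := by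
      rw [hwptdef, ← hlbv, ← Finset.sum_sub_distrib]
      rw [← Finset.sum_sdiff hIs]
      have h2 : ∀ v ∈ I, lb v • (if v ∈ I then v else ζ) - lb v • v = 0 := by
        intro v hv
        rw [if_pos hv, sub_self]
      rw [Finset.sum_congr rfl h2, Finset.sum_const_zero, add_zero]
      apply Finset.sum_congr rfl
      intro v hv
      have hvnI : v ∉ I := (Finset.mem_sdiff.1 hv).2
      rw [if_neg hvnI, ← smul_sub]
    have hnormd : ‖wpt - u‖ ≤ 2 * Mn * Cmax * ‖u - x‖ := by
      rw [hdiff]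
      calc ‖∑ v ∈ s₀ \ I, lb v • (ζ - v)‖ ≤ ∑ v ∈ s₀ \ I, ‖lb v • (ζ - v)‖ :=
            norm_sum_le _ _
        _ ≤ ∑ v ∈ s₀ \ I, lb v * (2 * Mn) := by
            apply Finset.sum_le_sum
            intro v hv
            have hvs : v ∈ s₀ := (Finset.mem_sdiff.1 hv).1
            have hlbnn := hlb0 v hvs
            rw [norm_smul, Real.norm_eq_abs, abs_of_nonneg hlbnn]
            apply mul_le_mul_of_nonneg_left _ hlbnn
            calc ‖ζ - v‖ ≤ ‖ζ‖ + ‖v‖ := norm_sub_le _ _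
              _ ≤ Mn + Mn := add_le_add (Finset.le_sup' _ hζs) (Finset.le_sup' _ hvs)
              _ = 2 * Mn := by ring
        _ = (∑ v ∈ s₀ \ I, lb v) * (2 * Mn) := by rw [Finset.sum_mul]
        _ ≤ (Cmax * ‖u - x‖) * (2 * Mn) := by
            apply mul_le_mul_of_nonneg_right hlbo'
            positivity
        _ = 2 * Mn * Cmax * ‖u - x‖ := by ring
    have hnormx : ‖wpt - x‖ ≤ K * ‖u - x‖ := by
      have h3 : wpt - x = (wpt - u) + (u - x) := by abel
      calc ‖wpt - x‖ = ‖(wpt - u) + (u - x)‖ := by rw [h3]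
        _ ≤ ‖wpt - u‖ + ‖u - x‖ := norm_add_le _ _
        _ ≤ 2 * Mn * Cmax * ‖u - x‖ + ‖u - x‖ := by linarith
        _ = K * ‖u - x‖ := by rw [hKdef]; ring
    have hsq : ‖wpt - x‖^2 ≤ K^2 * ‖u - x‖^2 := by
      have := pow_le_pow_left₀ (norm_nonneg (wpt - x)) hnormx 2
      calc ‖wpt - x‖^2 ≤ (K * ‖u - x‖)^2 := this
        _ = K^2 * ‖u - x‖^2 := by ring
    calc ⟪∑ i, γs i • z i, p⟫ + c / 2 * ‖(∑ i, γs i • z i) - x‖ ^ 2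
        ≤ ⟪wpt, p⟫ + c / 2 * ‖wpt - x‖ ^ 2 := hkey
      _ ≤ ⟪u, p⟫ + c / 2 * (K^2 * ‖u - x‖^2) := by
          have := mul_le_mul_of_nonneg_left hsq (by linarith : (0:ℝ) ≤ c / 2)
          linarith
      _ = ⟪u, p⟫ + K^2 * c / 2 * ‖u - x‖^2 := by ring
  · -- degenerate case : s₀ = ∅, so F = ∅
    refine ⟨1, le_refl 1, ?_⟩
    intro p c hc t z x hzext hxrep hζext hζmin γs hγs0 hγs1 hopt u hu
    exfalso
    rw [Finset.not_nonempty_iff_eq_empty] at hs₀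
    subst hs₀
    rw [Finset.coe_empty, convexHull_empty] at hF
    rw [hF] at hu
    exact Set.notMem_empty u hu

end

end
end
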